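/- arXiv:1405.2997 — 2 statements merged into one kernel-verified Lean document; each statement's English description precedes it below -/
import Mathlib

section
/- Suppose real numbers $\alpha_1,\alpha_2,\alpha_3,\alpha_4$ and $\tilde\alpha_1,\tilde\alpha_2,\tilde\alpha_3,\tilde\alpha_4$ satisfy: (a) $\alpha_j \sum_{i\neq j}\alpha_i = \tilde\alpha_j \sum_{i\neq j}\tilde\alpha_i$ for each $j=1,2,3,4$; (b) $\alpha_1\alpha_3+\alpha_1\alpha_4+\alpha_2\alpha_3+\alpha_2\alpha_4 = \tilde\alpha_1\tilde\alpha_3+\tilde\alpha_1\tilde\alpha_4+\tilde\alpha_2\tilde\alpha_3+\tilde\alpha_2\tilde\alpha_4$; (c) $\alpha_1\alpha_2+\alpha_1\alpha_3+\alpha_2\alpha_4+\alpha_3\alpha_4 = \tilde\alpha_1\tilde\alpha_2+\tilde\alpha_1\tilde\alpha_3+\tilde\alpha_2\tilde\alpha_4+\tilde\alpha_3\tilde\alpha_4$; (d) $\alpha_1\alpha_2+\alpha_1\alpha_4+\alpha_2\alpha_3+\alpha_3\alpha_4 = \tilde\alpha_1\tilde\alpha_2+\tilde\alpha_1\tilde\alpha_4+\tilde\alpha_2\tilde\alpha_3+\tilde\alpha_3\tilde\alpha_4$.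 Then $\alpha_i\alpha_j = \tilde\alpha_i\tilde\alpha_j$ for all pairs $i < j$. -/
theorem C4_quadratic_relations
    (a1 a2 a3 a4 b1 b2 b3 b4 : ℝ)
    (h1 : a1 * (a2 + a3 + a4) = b1 * (b2 + b3 + b4))
    (h2 : a2 * (a1 + a3 + a4) = b2 * (b1 + b3 + b4))
    (h3 : a3 * (a1 + a2 + a4) = b3 * (b1 + b2 + b4))
    (h4 : a4 * (a1 + a2 + a3) = b4 * (b1 + b2 + b3))
    (h5 : a1*a3 + a1*a4 + a2*a3 + a2*a4 = b1*b3 + b1*b4 + b2*b3 + b2*b4)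
    (h6 : a1*a2 + a1*a3 + a2*a4 + a3*a4 = b1*b2 + b1*b3 + b2*b4 + b3*b4)
    (h7 : a1*a2 + a1*a4 + a2*a3 + a3*a4 = b1*b2 + b1*b4 + b2*b3 + b3*b4) :
    a1*a2 = b1*b2 ∧ a1*a3 = b1*b3 ∧ a1*a4 = b1*b4 ∧
    a2*a3 = b2*b3 ∧ a2*a4 = b2*b4 ∧ a3*a4 = b3*b4 := by
  have e1 : (a1*a2 - b1*b2) + (a1*a3 - b1*b3) + (a1*a4 - b1*b4) = 0 := by
    linear_combination h1
  have e2 : (a1*a2 - b1*b2) + (a2*a3 - b2*b3) + (a2*a4 - b2*b4) = 0 := by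
    linear_combination h2
  have e3 : (a1*a3 - b1*b3) + (a2*a3 - b2*b3) + (a3*a4 - b3*b4) = 0 := by
    linear_combination h3
  have e4 : (a1*a4 - b1*b4) + (a2*a4 - b2*b4) + (a3*a4 - b3*b4) = 0 := by
    linear_combination h4
  have e5 : (a1*a3 - b1*b3) + (a1*a4 - b1*b4) + (a2*a3 - b2*b3) + (a2*a4 - b2*b4) = 0 := by
    linear_combination h5
  have e6 : (a1*a2 - b1*b2) + (a1*a3 - b1*b3) + (a2*a4 - b2*b4) + (a3*a4 - b3*b4) = 0 := by
    linear_combination h6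
  have e7 : (a1*a2 - b1*b2) + (a1*a4 - b1*b4) + (a2*a3 - b2*b3) + (a3*a4 - b3*b4) = 0 := by
    linear_combination h7
  refine ⟨by linarith, by linarith, by linarith, by linarith, by linarith, by linarith⟩
end

section
/- Suppose real numbers $\alpha_1,\alpha_2,\alpha_3,\alpha_4$ (all nonzero) and $\tilde\alpha_1,\tilde\alpha_2,\tilde\alpha_3,\tilde\alpha_4$ (all nonzero) satisfy: (1) $\sum_i \alpha_i = \sum_i \tilde\alpha_i$; (2) $\alpha_i\alpha_j = \tilde\alpha_i\tilde\alpha_j$ for all $i \neq j$; (3) each of the four triple products $\alpha_1\alpha_3\alpha_4+\alpha_2\alpha_3\alpha_4$, $\alpha_1\alpha_2\alpha_4+\alpha_1\alpha_3\alpha_4$, $\alpha_1\alpha_2\alpha_3+\alpha_1\alpha_2\alpha_4$, $\alpha_1\alpha_2\alpha_3+\alpha_2\alpha_3\alpha_4$ equals the corresponding expression in the $\tilde\alpha$'s; (4) $\alpha_1\alpha_2\alpha_3\alpha_4 = \tilde\alpha_1\tilde\alpha_2\tilde\alpha_3\tilde\alpha_4$. Then either $\alpha_i = \tilde\alpha_i$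 for all $i$, or there exists a real $\alpha \neq 0$ with $(\alpha_1,\alpha_2,\alpha_3,\alpha_4) = (\alpha,-\alpha,\alpha,-\alpha)$ and $(\tilde\alpha_1,\tilde\alpha_2,\tilde\alpha_3,\tilde\alpha_4) = (-\alpha,\alpha,-\alpha,\alpha)$. -/
theorem C4_isospectral_algebra
    (a1 a2 a3 a4 b1 b2 b3 b4 : ℝ)
    (ha1 : a1 ≠ 0) (ha2 : a2 ≠ 0) (ha3 : a3 ≠ 0) (ha4 : a4 ≠ 0)
    (hb1 : b1 ≠ 0) (hb2 : b2 ≠ 0) (hb3 : b3 ≠ 0) (hb4 : b4 ≠ 0)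
    (hsum : a1 + a2 + a3 + a4 = b1 + b2 + b3 + b4)
    (h12 : a1*a2 = b1*b2) (h13 : a1*a3 = b1*b3) (h14 : a1*a4 = b1*b4)
    (h23 : a2*a3 = b2*b3) (h24 : a2*a4 = b2*b4) (h34 : a3*a4 = b3*b4)
    (hc1 : a1*a3*a4 + a2*a3*a4 = b1*b3*b4 + b2*b3*b4)
    (hc2 : a1*a2*a4 + a1*a3*a4 = b1*b2*b4 + b1*b3*b4)
    (hc3 : a1*a2*a3 + a1*a2*a4 = b1*b2*b3 + b1*b2*b4)
    (hc4 : a1*a2*a3 + a2*a3*a4 = b1*b2*b3 + b2*b3*b4)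
    (hq : a1*a2*a3*a4 = b1*b2*b3*b4) :
    (a1 = b1 ∧ a2 = b2 ∧ a3 = b3 ∧ a4 = b4) ∨
    (∃ α : ℝ, α ≠ 0 ∧ a1 = α ∧ a2 = -α ∧ a3 = α ∧ a4 = -α ∧
      b1 = -α ∧ b2 = α ∧ b3 = -α ∧ b4 = α) := by
  have hsq : (b1 - a1) * (b1 + a1) * (a2 * a3) = 0 := by
    linear_combination b1^2 * h23 - b1*b3 * h12 - a1*a2 * h13
  have h23ne : a2 * a3 ≠ 0 := mul_ne_zero ha2 ha3
  have hfac : (b1 - a1) * (b1 + a1) = 0 :=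
    (mul_eq_zero.mp hsq).resolve_right h23ne
  rcases mul_eq_zero.mp hfac with h | h
  · -- b1 = a1
    have e1 : b1 = a1 := by linarith
    have e2 : b2 = a2 :=
      mul_left_cancel₀ ha1 (by linear_combination -h12 - b2 * e1)
    have e3 : b3 = a3 :=
      mul_left_cancel₀ ha1 (by linear_combination -h13 - b3 * e1)
    have e4 : b4 = a4 :=
      mul_left_cancel₀ ha1 (by linear_combination -h14 - b4 * e1)
    exact Or.inl ⟨e1.symm, e2.symm, e3.symm, e4.symm⟩
  · -- b1 = -a1
    have e1 : b1 = -a1 := by linarith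
    have e2 : b2 = -a2 :=
      mul_left_cancel₀ ha1 (by linear_combination h12 + b2 * e1)
    have e3 : b3 = -a3 :=
      mul_left_cancel₀ ha1 (by linear_combination h13 + b3 * e1)
    have e4 : b4 = -a4 :=
      mul_left_cancel₀ ha1 (by linear_combination h14 + b4 * e1)
    subst e1 e2 e3 e4
    have k1 : a2 + a3 = 0 := by
      have h' : a1 * a4 * (a2 + a3) = 0 := by linear_combination hc2 / 2
      exact (mul_eq_zero.mp h').resolve_left (mul_ne_zero ha1 ha4)
    have k2 : a1 + a2 = 0 := by
      have h' : a3 * a4 * (a1 + a2) = 0 := by linear_combination hc1 / 2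
      exact (mul_eq_zero.mp h').resolve_left (mul_ne_zero ha3 ha4)
    have k3 : a3 + a4 = 0 := by
      have h' : a1 * a2 * (a3 + a4) = 0 := by linear_combination hc3 / 2
      exact (mul_eq_zero.mp h').resolve_left (mul_ne_zero ha1 ha2)
    exact Or.inr ⟨a1, ha1, rfl, by linarith, by linarith, by linarith,
      rfl, by linarith, by linarith, by linarith⟩
end
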